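/- (Conditional mean of a Gaussian vector given a linear threshold.) Let X be a random vector in ℝ^p with the multivariate normal distribution N(0, Σ), where Σ is positive definite. Let c ∈ ℝ^p be nonzero, set γ = (cᵀ Σ c)^{1/2}, and let s ∈ ℝ. Then P(cᵀX > s) = 1 − Φ(s/γ) > 0 and E[X | cᵀX > s] = φ(s/γ) / ((1 − Φ(s/γ)) γ) · Σ c, where φ and Φ are the standard normal density and cumulative distribution function, and E[X | A] denotes the expectation of X under the conditional probability measure given the event A. -/

import Mathlib

open MeasureTheory ProbabilityTheory Matrix

/-- A random vector `X` is centered multivariate Gaussian `N(0, Σ)` iff every linear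
functional `cᵀX` is a centered real Gaussian with variance `cᵀ Σ c`. -/
def IsCenteredGaussianVector {Ω : Type*} [MeasurableSpace Ω] (μ : Measure Ω)
    {p : ℕ} (X : Ω → Fin p → ℝ) (S : Matrix (Fin p) (Fin p) ℝ) : Prop :=
  ∀ c : Fin p → ℝ,
    Measure.map (fun ω => ∑ i, c i * X ω i) μ =
      gaussianReal 0 (Real.toNNReal (c ⬝ᵥ S.mulVec c))

/-- The standard normal probability density function `φ`. -/
noncomputable def stdNormalPDF (u : ℝ) : ℝ :=
  (Real.sqrt (2 * Real.pi))⁻¹ * Real.exp (-u ^ 2 / 2)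

/-- The standard normal cumulative distribution function `Φ`. -/
noncomputable def stdNormalCDF (u : ℝ) : ℝ :=
  ∫ t in Set.Iic u, stdNormalPDF t

open Real Filter Set
open scoped NNReal ENNReal Topology

lemma stdNormalPDF_eq : stdNormalPDF = gaussianPDFReal 0 1 := by
  ext x
  simp [stdNormalPDF, gaussianPDFReal]

lemma integrable_stdNormalPDF : Integrable stdNormalPDF := by
  rw [stdNormalPDF_eq]; exact integrable_gaussianPDFReal 0 1

lemma integral_stdNormalPDF : ∫ x, stdNormalPDF x = 1 := by
  rw [stdNormalPDF_eq]; exact integral_gaussianPDFReal_eq_one 0 one_ne_zero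

lemma stdNormalPDF_pos (x : ℝ) : 0 < stdNormalPDF x := by
  rw [stdNormalPDF_eq]; exact gaussianPDFReal_pos 0 1 x one_ne_zero

lemma one_sub_stdNormalCDF (u : ℝ) :
    1 - stdNormalCDF u = ∫ x in Set.Ioi u, stdNormalPDF x := by
  have h := intervalIntegral.integral_Iic_add_Ioi (b := u) (μ := volume)
    integrable_stdNormalPDF.integrableOn integrable_stdNormalPDF.integrableOn
  rw [integral_stdNormalPDF] at h
  rw [stdNormalCDF]
  linarith

lemma stdNormalCDF_lt_one (u : ℝ) : 0 < 1 - stdNormalCDF u := by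
  rw [one_sub_stdNormalCDF]
  rw [setIntegral_pos_iff_support_of_nonneg_ae
    (ae_of_all _ fun x => (stdNormalPDF_pos x).le) integrable_stdNormalPDF.integrableOn]
  have : Function.support stdNormalPDF = Set.univ := by
    ext x; simp [(stdNormalPDF_pos x).ne']
  rw [this, Set.univ_inter]
  simp

lemma gaussianPDFReal_sq_eq {γ : ℝ} (hγ : 0 < γ) (x : ℝ) :
    gaussianPDFReal 0 (Real.toNNReal (γ ^ 2)) x = γ⁻¹ * stdNormalPDF (x / γ) := by
  rw [gaussianPDFReal, stdNormalPDF]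
  have hc : ((Real.toNNReal (γ ^ 2) : ℝ≥0) : ℝ) = γ ^ 2 := Real.coe_toNNReal _ (sq_nonneg γ)
  rw [hc]
  have h1 : Real.sqrt (2 * π * γ ^ 2) = Real.sqrt (2 * π) * γ := by
    rw [Real.sqrt_mul (by positivity), Real.sqrt_sq hγ.le]
  rw [h1]
  have h2 : -(x - 0) ^ 2 / (2 * γ ^ 2) = -(x / γ) ^ 2 / 2 := by
    rw [sub_zero, div_pow, neg_div, neg_div, div_div]
    ring_nf
  rw [h2, mul_inv]
  ring

lemma integral_Ioi_gaussianPDFReal {γ : ℝ} (hγ : 0 < γ) (s : ℝ) :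
    ∫ x in Set.Ioi s, gaussianPDFReal 0 (Real.toNNReal (γ ^ 2)) x
      = ∫ u in Set.Ioi (s / γ), stdNormalPDF u := by
  have h := integral_comp_mul_left_Ioi
    (g := fun x => gaussianPDFReal 0 (Real.toNNReal (γ ^ 2)) x) (s / γ) hγ
  rw [mul_div_cancel₀ s hγ.ne'] at h
  have h2 : ∀ x : ℝ, gaussianPDFReal 0 (Real.toNNReal (γ ^ 2)) (γ * x)
      = γ⁻¹ * stdNormalPDF x := by
    intro x
    rw [gaussianPDFReal_sq_eq hγ, mul_comm γ x, mul_div_assoc, div_self hγ.ne', mul_one]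
  simp_rw [h2] at h
  rw [integral_const_mul, smul_eq_mul] at h
  have := mul_left_cancel₀ (inv_ne_zero hγ.ne') h
  rw [this]

lemma integral_id_mul_gaussianPDFReal {v : ℝ≥0} (hv : v ≠ 0) (s : ℝ) :
    ∫ x in Set.Ioi s, x * gaussianPDFReal 0 v x = (v : ℝ) * gaussianPDFReal 0 v s := by
  have hvpos : (0 : ℝ) < v := lt_of_le_of_ne v.coe_nonneg (by exact_mod_cast (Ne.symm hv))
  set C : ℝ := (Real.sqrt (2 * π * v))⁻¹ with hC
  have hpdf : ∀ x : ℝ, gaussianPDFReal 0 v x = C * Real.exp (-x ^ 2 / (2 * v)) := by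
    intro x; rw [gaussianPDFReal, sub_zero]
  have hderiv : ∀ x : ℝ, HasDerivAt (fun y => -(v : ℝ) * (C * Real.exp (-y ^ 2 / (2 * v))))
      (x * gaussianPDFReal 0 v x) x := by
    intro x
    have h1 : HasDerivAt (fun y : ℝ => -y ^ 2 / (2 * (v : ℝ))) (-x / v) x := by
      have : HasDerivAt (fun y : ℝ => -y ^ 2) (-(2 * x)) x := by
        simpa using ((hasDerivAt_pow 2 x).fun_neg)
      have := this.div_const (2 * (v : ℝ))
      refine this.congr_deriv ?_
      field_simp
    have h2 := (h1.exp.const_mul C).const_mul (-(v : ℝ))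
    refine h2.congr_deriv ?_
    rw [hpdf x]
    field_simp
  have hint : IntegrableOn (fun x => x * gaussianPDFReal 0 v x) (Set.Ioi s) := by
    apply Integrable.integrableOn
    have hb : (0 : ℝ) < (2 * (v : ℝ))⁻¹ := by positivity
    have h3 := (integrable_mul_exp_neg_mul_sq hb).const_mul C
    have heq : (fun x => C * (x * Real.exp (-(2 * (v : ℝ))⁻¹ * x ^ 2)))
        = fun x => x * gaussianPDFReal 0 v x := by
      funext x
      rw [hpdf, show -(2 * (v : ℝ))⁻¹ * x ^ 2 = -x ^ 2 / (2 * (v : ℝ)) by ring]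
      ring
    rwa [heq] at h3
  have htend : Tendsto (fun y : ℝ => -(v : ℝ) * (C * Real.exp (-y ^ 2 / (2 * v)))) atTop (𝓝 0) := by
    have h1 : Tendsto (fun y : ℝ => -y ^ 2 / (2 * (v : ℝ))) atTop atBot := by
      apply Filter.Tendsto.atBot_div_const (by positivity)
      simpa using (tendsto_pow_atTop (n := 2) (by norm_num)).neg
    have h2 := (Real.tendsto_exp_atBot.comp h1).const_mul C
    have h3 := h2.const_mul (-(v : ℝ))
    simpa using h3
  have := integral_Ioi_of_hasDerivAt_of_tendsto' (fun x _ => hderiv x) hint htend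
  rw [this, hpdf s]
  ring

lemma integrable_id_gaussianReal (v : ℝ≥0) :
    Integrable (fun x : ℝ => x) (gaussianReal 0 v) := by
  by_cases hv : v = 0
  · subst hv
    rw [gaussianReal_zero_var]
    have h : (fun x : ℝ => x) =ᵐ[Measure.dirac 0] (fun _ => (0:ℝ)) :=
      MeasureTheory.ae_eq_dirac' measurable_id
    exact (integrable_const 0).congr h.symm
  · have hvpos : (0 : ℝ) < v := lt_of_le_of_ne v.coe_nonneg (by exact_mod_cast (Ne.symm hv))
    rw [gaussianReal_of_var_ne_zero _ hv]
    have hmeas : Measurable fun x : ℝ => (gaussianPDFReal 0 v x).toNNReal :=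
      (measurable_gaussianPDFReal 0 v).real_toNNReal
    have : (volume.withDensity (gaussianPDF 0 v))
        = volume.withDensity (fun x => ((gaussianPDFReal 0 v x).toNNReal : ℝ≥0∞)) := rfl
    rw [this, integrable_withDensity_iff_integrable_coe_smul hmeas]
    have hb : (0 : ℝ) < (2 * (v : ℝ))⁻¹ := by positivity
    have h3 := (integrable_mul_exp_neg_mul_sq hb).const_mul (Real.sqrt (2 * π * v))⁻¹
    apply h3.congr
    filter_upwards with x
    rw [show ((gaussianPDFReal 0 v x).toNNReal : ℝ) • x = gaussianPDFReal 0 v x * x from by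
      rw [smul_eq_mul, Real.coe_toNNReal _ (gaussianPDFReal_nonneg 0 v x)],
      gaussianPDFReal, sub_zero, show -(2 * (v : ℝ))⁻¹ * x ^ 2 = -x ^ 2 / (2 * (v : ℝ)) by ring]
    ring

lemma integrable_of_map_gaussianReal {Ω : Type*} [MeasurableSpace Ω] {μ : Measure Ω}
    {T : Ω → ℝ} (hT : Measurable T) {v : ℝ≥0}
    (h : Measure.map T μ = gaussianReal 0 v) : Integrable T μ := by
  have := integrable_id_gaussianReal v
  rw [← h] at this
  exact (integrable_map_measure stronglyMeasurable_id.aestronglyMeasurable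
    hT.aemeasurable).mp this

lemma setIntegral_gaussianReal {v : ℝ≥0} (hv : v ≠ 0) {f : ℝ → ℝ}
    (hf : Measurable f) {t : Set ℝ} (ht : MeasurableSet t) :
    ∫ x in t, f x ∂(gaussianReal 0 v) = ∫ x in t, gaussianPDFReal 0 v x * f x := by
  rw [gaussianReal_of_var_ne_zero _ hv]
  have : (volume.withDensity (gaussianPDF 0 v))
      = volume.withDensity (fun x => ((gaussianPDFReal 0 v x).toNNReal : ℝ≥0∞)) := rfl
  rw [this, restrict_withDensity ht,
    integral_withDensity_eq_integral_smul ((measurable_gaussianPDFReal 0 v).real_toNNReal) f]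
  congr 1
  funext x
  rw [NNReal.smul_def, smul_eq_mul, Real.coe_toNNReal _ (gaussianPDFReal_nonneg 0 v x)]

lemma key_orthogonal {Ω : Type*} [MeasurableSpace Ω] (μ : Measure Ω) [IsProbabilityMeasure μ]
    (Z T : Ω → ℝ) (hZ : Measurable Z) (hT : Measurable T) (σ2 : ℝ) {v : ℝ} (hv : 0 < v)
    (hlaw : ∀ a : ℝ, Measure.map (fun ω => a * Z ω + T ω) μ
      = gaussianReal 0 (Real.toNNReal (a ^ 2 * σ2 + v)))
    (s : ℝ) :
    ∫ ω in {ω | s < T ω}, Z ω ∂μ = 0 := by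
  have hvne : Real.toNNReal v ≠ 0 := by
    simp only [ne_eq, Real.toNNReal_eq_zero, not_le]; exact hv
  have hTlaw : Measure.map T μ = gaussianReal 0 (Real.toNNReal v) := by
    have h0 := hlaw 0
    simp only [zero_mul, zero_add, ne_eq, OfNat.ofNat_ne_zero, not_false_eq_true,
      zero_pow, zero_mul, zero_add] at h0
    exact h0
  have hTint : Integrable T μ := integrable_of_map_gaussianReal hT hTlaw
  have hZTmeas : ∀ a : ℝ, Measurable (fun ω => a * Z ω + T ω) :=
    fun a => (hZ.const_mul a).add hT
  have hZint : Integrable Z μ := by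
    have h1 : Integrable (fun ω => 1 * Z ω + T ω) μ :=
      integrable_of_map_gaussianReal (hZTmeas 1) (hlaw 1)
    have := h1.sub hTint
    apply this.congr
    filter_upwards with ω
    simp only [Pi.sub_apply]
    ring
  have hnull : μ {ω | T ω = s} = 0 := by
    have h1 : {ω | T ω = s} = T ⁻¹' {s} := rfl
    rw [h1, ← Measure.map_apply hT (measurableSet_singleton s), hTlaw]
    exact gaussianReal_absolutelyContinuous 0 hvne (volume_singleton)
  have hAmeas : MeasurableSet {ω | s < T ω} := measurableSet_lt measurable_const hT
  -- integrability of the max functions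
  have hu : ∀ a : ℝ, Integrable (fun ω => max (a * Z ω + T ω - s) 0) μ := by
    intro a
    refine Integrable.mono' (g := fun ω => |a * Z ω + T ω - s|)
      (((hZint.const_mul a).add hTint).sub (integrable_const s)).abs
      (((hZTmeas a).sub_const s).max measurable_const).aestronglyMeasurable ?_
    filter_upwards with ω
    rw [Real.norm_eq_abs]
    rcases le_total (a * Z ω + T ω - s) 0 with h | h
    · rw [max_eq_right h, abs_zero]; exact abs_nonneg _
    · rw [max_eq_left h]
  -- G and its evenness
  set G : ℝ → ℝ := fun a => ∫ ω, max (a * Z ω + T ω - s) 0 ∂μ with hG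
  have hGmap : ∀ a : ℝ, G a
      = ∫ x, max (x - s) 0 ∂(gaussianReal 0 (Real.toNNReal (a ^ 2 * σ2 + v))) := by
    intro a
    rw [hG, ← hlaw a, integral_map (hZTmeas a).aemeasurable
      (Continuous.aestronglyMeasurable (by fun_prop))]
  have hGeven : ∀ a : ℝ, G (-a) = G a := by
    intro a
    rw [hGmap, hGmap, neg_pow, show ((-1:ℝ))^2 = 1 by norm_num, one_mul]
  have hG0 : G 0 = ∫ ω, max (T ω - s) 0 ∂μ := by
    rw [hG]; simp
  -- the sequential derivative argument
  have main : ∀ h : ℕ → ℝ, (∀ n, h n ≠ 0) → Tendsto h atTop (𝓝 0) →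
      Tendsto (fun n => (G (h n) - G 0) / h n) atTop (𝓝 (∫ ω in {ω | s < T ω}, Z ω ∂μ)) := by
    intro h hne hlim
    have hInt : ∀ n, (G (h n) - G 0) / h n
        = ∫ ω, (max (h n * Z ω + T ω - s) 0 - max (T ω - s) 0) / h n ∂μ := by
      intro n
      have e1 : ∫ ω, (max (h n * Z ω + T ω - s) 0 - max (T ω - s) 0) / h n ∂μ
          = (G (h n) - G 0) / h n := by
        rw [integral_div, integral_sub (hu (h n)) (by simpa using hu 0), hG0]
      exact e1.symm
    have hind : ∫ ω in {ω | s < T ω}, Z ω ∂μ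
        = ∫ ω, Set.indicator {ω | s < T ω} Z ω ∂μ := (integral_indicator hAmeas).symm
    rw [hind]
    simp_rw [hInt]
    apply tendsto_integral_of_dominated_convergence (bound := fun ω => |Z ω|)
    · intro n
      exact (((((hZ.const_mul (h n)).add hT).sub_const s).max measurable_const).sub
        ((hT.sub_const s).max measurable_const)).div_const (h n) |>.aestronglyMeasurable
    · exact hZint.abs
    · intro n
      filter_upwards with ω
      rw [Real.norm_eq_abs, abs_div]
      rw [div_le_iff₀ (abs_pos.mpr (hne n))]
      calc |max (h n * Z ω + T ω - s) 0 - max (T ω - s) 0|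
          ≤ |(h n * Z ω + T ω - s) - (T ω - s)| := abs_max_sub_max_le_abs _ _ _
        _ = |h n * Z ω| := by ring_nf
        _ = |Z ω| * |h n| := by rw [abs_mul]; ring
    · have hae : ∀ᵐ ω ∂μ, T ω ≠ s := by
        rw [ae_iff]
        simpa using hnull
      filter_upwards [hae] with ω hωne
      have hZlim : Tendsto (fun n => h n * Z ω) atTop (𝓝 0) := by
        simpa using hlim.mul_const (Z ω)
      rcases hωne.lt_or_gt with hlt | hlt
      · -- T ω < s : indicator is 0, terms eventually 0
        have hev : ∀ᶠ n in atTop, |h n * Z ω| < s - T ω := by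
          have := Metric.tendsto_nhds.mp hZlim (s - T ω) (by linarith)
          filter_upwards [this] with n hn
          rwa [Real.dist_eq, sub_zero] at hn
        have hind0 : Set.indicator {ω | s < T ω} Z ω = 0 := by
          apply Set.indicator_of_notMem
          simp only [Set.mem_setOf_eq, not_lt]
          linarith
        rw [hind0]
        apply Tendsto.congr' ?_ tendsto_const_nhds
        filter_upwards [hev] with n hn
        have h1 : h n * Z ω + T ω - s < 0 := by
          have h2 := le_abs_self (h n * Z ω)
          linarith
        rw [max_eq_right h1.le, max_eq_right (by linarith : T ω - s ≤ 0)]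
        simp
      · -- s < T ω : indicator is Z ω
        have hev : ∀ᶠ n in atTop, |h n * Z ω| < T ω - s := by
          have := Metric.tendsto_nhds.mp hZlim (T ω - s) (by linarith)
          filter_upwards [this] with n hn
          rwa [Real.dist_eq, sub_zero] at hn
        have hind1 : Set.indicator {ω | s < T ω} Z ω = Z ω :=
          Set.indicator_of_mem (show ω ∈ {ω | s < T ω} from hlt) Z
        rw [hind1]
        apply Tendsto.congr' ?_ tendsto_const_nhds
        filter_upwards [hev] with n hn
        have h1 : 0 < h n * Z ω + T ω - s := by
          have h2 := neg_abs_le (h n * Z ω)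
          linarith
        rw [max_eq_left h1.le, max_eq_left (by linarith : (0:ℝ) ≤ T ω - s),
          show h n * Z ω + T ω - s - (T ω - s) = h n * Z ω from by ring,
          mul_comm, mul_div_assoc, div_self (hne n), mul_one]
  -- conclude via evenness
  have hpos : ∀ n : ℕ, ((n : ℝ) + 1)⁻¹ ≠ 0 := fun n => by positivity
  have htend : Tendsto (fun n : ℕ => ((n : ℝ) + 1)⁻¹) atTop (𝓝 0) :=
    tendsto_one_div_add_atTop_nhds_zero_nat |>.congr (fun n => by rw [one_div])
  have L1 := main (fun n => ((n : ℝ) + 1)⁻¹) hpos htend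
  have L2 := main (fun n => -((n : ℝ) + 1)⁻¹) (fun n => neg_ne_zero.mpr (hpos n))
    (by simpa using htend.neg)
  have hEq : (fun n : ℕ => (G (-((n : ℝ) + 1)⁻¹) - G 0) / (-((n : ℝ) + 1)⁻¹))
      = fun n : ℕ => -((G (((n : ℝ) + 1)⁻¹) - G 0) / ((n : ℝ) + 1)⁻¹) := by
    funext n
    rw [hGeven, div_neg]
  rw [hEq] at L2
  have := tendsto_nhds_unique L2 L1.neg
  linarith [this]

/-- conditional mean of a Gaussian vector given a linear threshold.
For `X ~ N(0, Σ)` with `Σ` positive definite, nonzero `c`, `γ = (cᵀ Σ c)^{1/2}`,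
`P(cᵀX > s) = 1 - Φ(s/γ) > 0` and
`E[X | cᵀX > s] = φ(s/γ) / ((1 - Φ(s/γ)) γ) · Σ c`. -/

theorem gaussian_conditional_mean_linear_threshold
    {Ω : Type*} [MeasurableSpace Ω] (μ : Measure Ω) [IsProbabilityMeasure μ]
    (p : ℕ) (X : Ω → Fin p → ℝ) (hX : Measurable X)
    (S : Matrix (Fin p) (Fin p) ℝ) (hS : S.PosDef)
    (hGauss : IsCenteredGaussianVector μ X S)
    (c : Fin p → ℝ) (hc : c ≠ 0) (s : ℝ)
    (γ : ℝ) (hγ : γ = Real.sqrt (c ⬝ᵥ S.mulVec c)) :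
    μ {ω | s < ∑ i, c i * X ω i} = ENNReal.ofReal (1 - stdNormalCDF (s / γ)) ∧
    0 < 1 - stdNormalCDF (s / γ) ∧
    ∫ ω, X ω ∂(μ[|{ω | s < ∑ i, c i * X ω i}])
      = (stdNormalPDF (s / γ) / ((1 - stdNormalCDF (s / γ)) * γ)) • S.mulVec c := by
  classical
  have hXi : ∀ i, Measurable fun ω => X ω i := fun i => (measurable_pi_apply i).comp hX
  set T : Ω → ℝ := fun ω => ∑ i, c i * X ω i with hT_def
  have hTmeas : Measurable T :=
    Finset.measurable_sum _ fun i _ => (hXi i).const_mul (c i)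
  have hv : 0 < c ⬝ᵥ S.mulVec c := by
    have := hS.dotProduct_mulVec_pos hc
    simpa using this
  have hγpos : 0 < γ := by rw [hγ]; exact Real.sqrt_pos.mpr hv
  have hγsq : γ ^ 2 = c ⬝ᵥ S.mulVec c := by rw [hγ, Real.sq_sqrt hv.le]
  have hvne : Real.toNNReal (c ⬝ᵥ S.mulVec c) ≠ 0 := by
    simp only [ne_eq, Real.toNNReal_eq_zero, not_le]; exact hv
  have hlawT : Measure.map T μ = gaussianReal 0 (Real.toNNReal (c ⬝ᵥ S.mulVec c)) := hGauss c
  have hμA : μ {ω | s < T ω} = ENNReal.ofReal (1 - stdNormalCDF (s / γ)) := by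
    have h1 : {ω | s < T ω} = T ⁻¹' (Set.Ioi s) := rfl
    rw [h1, ← Measure.map_apply hTmeas measurableSet_Ioi, hlawT,
      gaussianReal_apply_eq_integral 0 hvne]
    congr 1
    rw [← hγsq, integral_Ioi_gaussianPDFReal hγpos, ← one_sub_stdNormalCDF]
  have hposP : 0 < 1 - stdNormalCDF (s / γ) := stdNormalCDF_lt_one _
  refine ⟨hμA, hposP, ?_⟩
  have hμAne : μ {ω | s < T ω} ≠ 0 := by
    rw [hμA]
    simp only [ne_eq, ENNReal.ofReal_eq_zero, not_le]
    exact hposP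
  have hμAtop : (μ {ω | s < T ω})⁻¹ ≠ ⊤ := ENNReal.inv_ne_top.mpr hμAne
  have hAmeas : MeasurableSet {ω | s < T ω} := measurableSet_lt measurable_const hTmeas
  have hXiInt : ∀ i, Integrable (fun ω => X ω i) μ := by
    intro i
    have h1 := hGauss (Pi.single i 1)
    have h2 : (fun ω => ∑ j, (Pi.single i 1 : Fin p → ℝ) j * X ω j) = fun ω => X ω i := by
      funext ω
      simp [Pi.single_apply]
    rw [h2] at h1
    exact integrable_of_map_gaussianReal (hXi i) h1
  have hTint : Integrable T μ := integrable_of_map_gaussianReal hTmeas hlawT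
  have hS' : ∀ a b, S a b = S b a := fun a b => by
    have := congrFun (congrFun hS.1 a) b
    simpa [Matrix.conjTranspose_apply] using this.symm
  have hsymm : ∀ x y : Fin p → ℝ, x ⬝ᵥ S.mulVec y = y ⬝ᵥ S.mulVec x := by
    intro x y
    simp only [Matrix.mulVec, dotProduct, Finset.mul_sum]
    rw [Finset.sum_comm]
    apply Finset.sum_congr rfl; intro b _
    apply Finset.sum_congr rfl; intro a _
    rw [hS' a b]; ring
  have hcond : μ[|{ω | s < T ω}]
      = (μ {ω | s < T ω})⁻¹ • μ.restrict {ω | s < T ω} := rfl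
  have hXiIntA : ∀ i, Integrable (fun ω => X ω i) (μ[|{ω | s < T ω}]) := by
    intro i
    rw [hcond]
    exact ((hXiInt i).restrict).smul_measure hμAtop
  have hXIntA : Integrable X (μ[|{ω | s < T ω}]) := by
    refine Integrable.mono' (g := fun ω => ∑ j, |X ω j|)
      (integrable_finset_sum _ fun j _ => (hXiIntA j).abs) hX.aestronglyMeasurable ?_
    filter_upwards with ω
    rw [pi_norm_le_iff_of_nonneg (by positivity)]
    intro j
    calc ‖X ω j‖ = |X ω j| := Real.norm_eq_abs _
      _ ≤ ∑ j', |X ω j'| := Finset.single_le_sum (f := fun j' => |X ω j'|)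
        (fun _ _ => abs_nonneg _) (Finset.mem_univ j)
  have hcoord : ∀ i, ∫ ω, X ω i ∂(μ[|{ω | s < T ω}])
      = (stdNormalPDF (s / γ) / ((1 - stdNormalCDF (s / γ)) * γ)) * S.mulVec c i := by
    intro i
    set β : ℝ := S.mulVec c i / (c ⬝ᵥ S.mulVec c) with hβ
    have hZmeas : Measurable fun ω => X ω i - β * T ω := (hXi i).sub (hTmeas.const_mul β)
    set d : Fin p → ℝ := Pi.single i 1 - β • c with hd
    have hdc : d ⬝ᵥ S.mulVec c = 0 := by
      rw [hd, sub_dotProduct, smul_dotProduct, single_dotProduct,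
        smul_eq_mul, hβ, one_mul]
      field_simp
      ring
    have hcd : c ⬝ᵥ S.mulVec d = 0 := (hsymm c d).trans hdc
    have hlaw : ∀ a : ℝ, Measure.map (fun ω => a * (X ω i - β * T ω) + T ω) μ
        = gaussianReal 0 (Real.toNNReal (a ^ 2 * (d ⬝ᵥ S.mulVec d) + c ⬝ᵥ S.mulVec c)) := by
      intro a
      have h1 : ∀ ω, ∑ j, d j * X ω j = X ω i - β * T ω := by
        intro ω
        rw [hd]
        simp only [Pi.sub_apply, Pi.smul_apply, smul_eq_mul, sub_mul,
          Finset.sum_sub_distrib]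
        congr 1
        · simp [Pi.single_apply]
        · rw [hT_def, Finset.mul_sum]
          apply Finset.sum_congr rfl; intro j _
          ring
      have hfun : (fun ω => a * (X ω i - β * T ω) + T ω)
          = fun ω => ∑ j, (a • d + c) j * X ω j := by
        funext ω
        rw [← h1 ω, hT_def]
        simp only [Finset.mul_sum, Pi.add_apply, Pi.smul_apply, smul_eq_mul]
        rw [← Finset.sum_add_distrib]
        apply Finset.sum_congr rfl; intro j _
        ring
      rw [hfun, hGauss]
      congr 2
      have expand : (a • d + c) ⬝ᵥ S.mulVec (a • d + c)
          = a * (a * (d ⬝ᵥ S.mulVec d)) + a * (d ⬝ᵥ S.mulVec c)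
            + (a * (c ⬝ᵥ S.mulVec d) + c ⬝ᵥ S.mulVec c) := by
        simp only [Matrix.mulVec_add, Matrix.mulVec_smul, add_dotProduct,
          smul_dotProduct, dotProduct_add, dotProduct_smul,
          smul_eq_mul]
        ring
      rw [expand, hdc, hcd]
      ring
    have hkey := key_orthogonal μ (fun ω => X ω i - β * T ω) T hZmeas hTmeas
      (d ⬝ᵥ S.mulVec d) hv hlaw s
    have hZint : Integrable (fun ω => X ω i - β * T ω) μ :=
      (hXiInt i).sub (hTint.const_mul β)
    have hsplit : ∫ ω in {ω | s < T ω}, X ω i ∂μ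
        = β * ∫ ω in {ω | s < T ω}, T ω ∂μ := by
      have h1 : ∫ ω in {ω | s < T ω}, X ω i ∂μ
          = ∫ ω in {ω | s < T ω}, ((X ω i - β * T ω) + β * T ω) ∂μ := by
        apply integral_congr_ae
        filter_upwards with ω
        ring
      rw [h1, integral_add hZint.restrict ((hTint.const_mul β).restrict), hkey, zero_add,
        integral_const_mul]
    have hTA : ∫ ω in {ω | s < T ω}, T ω ∂μ = γ * stdNormalPDF (s / γ) := by
      have h1 : {ω | s < T ω} = T ⁻¹' (Set.Ioi s) := rfl
      have h2 := setIntegral_map (μ := μ) (g := T) (f := fun x : ℝ => x)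
        (s := Set.Ioi s) measurableSet_Ioi aestronglyMeasurable_id hTmeas.aemeasurable
      rw [h1, ← h2, hlawT, setIntegral_gaussianReal hvne measurable_id' measurableSet_Ioi]
      have h3 : ∫ x in Set.Ioi s, gaussianPDFReal 0 (Real.toNNReal (c ⬝ᵥ S.mulVec c)) x * x
          = ∫ x in Set.Ioi s, x * gaussianPDFReal 0 (Real.toNNReal (c ⬝ᵥ S.mulVec c)) x := by
        apply integral_congr_ae
        filter_upwards with x
        ring
      rw [h3, integral_id_mul_gaussianPDFReal hvne s,
        Real.coe_toNNReal _ hv.le, ← hγsq, gaussianPDFReal_sq_eq hγpos]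
      field_simp
    rw [hcond, integral_smul_measure, hμA, ENNReal.toReal_inv,
      ENNReal.toReal_ofReal hposP.le, hsplit, hTA, smul_eq_mul, hβ, ← hγsq]
    field_simp
  funext i
  have hproj := ContinuousLinearMap.integral_comp_comm
    (ContinuousLinearMap.proj (R := ℝ) (φ := fun _ : Fin p => ℝ) i) hXIntA
  have h5 : (∫ ω, X ω ∂(μ[|{ω | s < T ω}])) i
      = ∫ ω, X ω i ∂(μ[|{ω | s < T ω}]) := by
    simpa using hproj.symm
  rw [h5, hcoord i, Pi.smul_apply, smul_eq_mul]
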